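/- With the Yule model setup, Var(U^{(n)} − τ^{(n)}) = 4(H_{n,2} − 1) − 2H_{n,1}^2/(n-1) + 4H_{n,1}/(n-1) + 6H_{n,2}/(n-1) − 8/(n-1) − 4(H_{n,1} − 1)^2/(n-1)^2, which converges to 2π²/3 − 4 as n → ∞. -/

import Mathlib

open MeasureTheory ProbabilityTheory Finset Real Filter Topology Set
open scoped NNReal ENNReal


noncomputable def hh1 (k : ℕ) : ℝ := ∑ i ∈ Finset.Icc 1 k, (1:ℝ)/i
noncomputable def hh2 (k : ℕ) : ℝ := ∑ i ∈ Finset.Icc 1 k, (1:ℝ)/(i:ℝ)^2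

lemma hh1_succ (k : ℕ) : hh1 (k+1) = hh1 k + 1/((k:ℝ)+1) := by
  unfold hh1; rw [Finset.sum_Icc_succ_top (by omega)]; push_cast; ring

lemma hh2_succ (k : ℕ) : hh2 (k+1) = hh2 k + 1/((k:ℝ)+1)^2 := by
  unfold hh2; rw [Finset.sum_Icc_succ_top (by omega)]; push_cast; ring

lemma hh1_one : hh1 1 = 1 := by simp [hh1]
lemma hh2_one : hh2 1 = 1 := by simp [hh2]

lemma hh1_ge_one {m : ℕ} (hm : 1 ≤ m) : 1 ≤ hh1 m := by
  unfold hh1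
  have : (1:ℝ)/(1:ℕ) ≤ ∑ i ∈ Finset.Icc 1 m, (1:ℝ)/i :=
    Finset.single_le_sum (f := fun i : ℕ => (1:ℝ)/i) (fun i _ => by positivity)
      (by simp [Finset.mem_Icc, hm])
  simpa using this

lemma hh1_le_log (m : ℕ) : hh1 m ≤ 1 + Real.log m := by
  have h := harmonic_le_one_add_log m
  have e : hh1 m = (harmonic m : ℝ) := by
    unfold hh1
    rw [← Finset.Ico_add_one_right_eq_Icc, Finset.sum_Ico_eq_sum_range]
    simp only [harmonic, Rat.cast_sum, Rat.cast_inv, Rat.cast_natCast]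
    refine Finset.sum_congr (by norm_num) fun i _ => ?_
    push_cast; rw [one_div, add_comm]
  rw [e]; exact_mod_cast h

lemma sumB (m : ℕ) (hm : 1 ≤ m) :
    ∑ k ∈ Finset.Icc 1 m, (1/(((k:ℝ)+1)*((k:ℝ)+2))) * hh1 k
      = 1 - hh1 m/((m:ℝ)+2) - 1/((m:ℝ)+1) := by
  induction m, hm using Nat.le_induction with
  | base => norm_num [hh1_one]
  | succ p hp ih =>
    rw [Finset.sum_Icc_succ_top (by omega), ih, hh1_succ]
    have h1 : (p:ℝ)+1 ≠ 0 := by positivity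
    have h2 : (p:ℝ)+2 ≠ 0 := by positivity
    have h3 : (p:ℝ)+3 ≠ 0 := by positivity
    push_cast
    field_simp
    ring

lemma sumCD (m : ℕ) (hm : 1 ≤ m) :
    ∑ k ∈ Finset.Icc 1 m, (1/(((k:ℝ)+1)*((k:ℝ)+2))) * (hh2 k + hh1 k^2)
      = (hh2 m * ((m:ℝ)+1)/((m:ℝ)+2) + 1/((m:ℝ)+1) - 1)
        + (hh2 m + 1 - hh1 m^2/((m:ℝ)+2) - 2*hh1 m/((m:ℝ)+1) - 1/((m:ℝ)+1)) := by
  induction m, hm using Nat.le_induction with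
  | base => norm_num [hh1_one, hh2_one]
  | succ p hp ih =>
    rw [Finset.sum_Icc_succ_top (by omega), ih, hh1_succ, hh2_succ]
    have h1 : (p:ℝ)+1 ≠ 0 := by positivity
    have h2 : (p:ℝ)+2 ≠ 0 := by positivity
    have h3 : (p:ℝ)+3 ≠ 0 := by positivity
    push_cast
    field_simp
    ring

lemma final_alg (M x1 x2 : ℝ) (hM : 1 ≤ M) :
    (2*((M+1)+1)/M) * ((x2*(M+1)/(M+2) + 1/(M+1) - 1)
        + (x2 + 1 - x1^2/(M+2) - 2*x1/(M+1) - 1/(M+1)))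
      - ((2*((M+1)+1)/M) * (1 - x1/(M+2) - 1/(M+1)))^2
    = 4*((x2 + 1/(M+1)^2) - 1) - 2*(x1+1/(M+1))^2/M + 4*(x1+1/(M+1))/M
        + 6*(x2+1/(M+1)^2)/M - 8/M - 4*((x1+1/(M+1))-1)^2/M^2 := by
  have h0 : M ≠ 0 := by linarith
  have h1 : M+1 ≠ 0 := by linarith
  have h2 : M+2 ≠ 0 := by linarith
  field_simp
  ring


lemma tendsto_hh2 : Tendsto hh2 atTop (nhds (Real.pi^2/6)) := by
  have h := hasSum_zeta_two.tendsto_sum_nat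
  have e : ∀ m : ℕ, hh2 m = ∑ i ∈ Finset.range (m+1), (1:ℝ)/(i:ℝ)^2 := by
    intro m
    rw [Finset.range_eq_Ico, Finset.sum_eq_sum_Ico_succ_bot (by omega)]
    unfold hh2
    rw [← Finset.Ico_add_one_right_eq_Icc]
    norm_num
  have : Tendsto (fun m : ℕ => ∑ i ∈ Finset.range (m+1), (1:ℝ)/(i:ℝ)^2) atTop
      (nhds (Real.pi^2/6)) := h.comp (tendsto_add_atTop_nat 1)
  exact this.congr (fun m => (e m).symm)

lemma tendsto_inv_sub_one : Tendsto (fun m : ℕ => 1/((m:ℝ)-1)) atTop (nhds 0) := by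
  have : Tendsto (fun x : ℝ => x - 1) atTop atTop := tendsto_atTop_add_const_right _ (-1) tendsto_id
  simpa [one_div, Pi.inv_def, Function.comp_def] using (this.comp tendsto_natCast_atTop_atTop).inv_tendsto_atTop

lemma tendsto_g : Tendsto (fun x : ℝ => 4*(1+Real.log x)^2/(x-1)) atTop (nhds 0) := by
  have h2 := Real.tendsto_pow_log_div_mul_add_atTop 1 (-1) 2 one_ne_zero
  have h1 := Real.tendsto_pow_log_div_mul_add_atTop 1 (-1) 1 one_ne_zero
  have h0 := Real.tendsto_pow_log_div_mul_add_atTop 1 (-1) 0 one_ne_zero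
  have := ((h2.const_mul 4).add ((h1.const_mul 8).add (h0.const_mul 4)))
  simp only [mul_zero, add_zero] at this
  refine this.congr (fun x => ?_)
  have : (1:ℝ)*x + (-1) = x - 1 := by ring
  rw [this]
  by_cases h : x - 1 = 0
  · simp [h]
  · field_simp
    ring

lemma tendsto_gnat : Tendsto (fun m : ℕ => 4*(1+Real.log m)^2/((m:ℝ)-1)) atTop (nhds 0) :=
  tendsto_g.comp tendsto_natCast_atTop_atTop

lemma ev_facts : ∀ᶠ m : ℕ in atTop, (2:ℝ) ≤ (m:ℝ) - 1 ∧ 1 ≤ hh1 m ∧ hh1 m ≤ 1 + Real.log m := by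
  filter_upwards [eventually_ge_atTop 3] with m hm
  have : (3:ℝ) ≤ (m:ℝ) := by exact_mod_cast hm
  exact ⟨by linarith, hh1_ge_one (by omega), hh1_le_log m⟩

lemma sq_zero : Tendsto (fun m : ℕ => 2*(hh1 m)^2/((m:ℝ)-1)) atTop (nhds 0) := by
  refine tendsto_of_tendsto_of_tendsto_of_le_of_le' tendsto_const_nhds tendsto_gnat ?_ ?_
  · filter_upwards [ev_facts] with m ⟨h1, h2, h3⟩; positivity
  · filter_upwards [ev_facts] with m ⟨h1, h2, h3⟩
    have hb : 0 ≤ 1 + Real.log m := by linarith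
    exact div_le_div₀ (by positivity) (by nlinarith) (by linarith) le_rfl

lemma lin_zero : Tendsto (fun m : ℕ => 4*(hh1 m)/((m:ℝ)-1)) atTop (nhds 0) := by
  refine tendsto_of_tendsto_of_tendsto_of_le_of_le' tendsto_const_nhds tendsto_gnat ?_ ?_
  · filter_upwards [ev_facts] with m ⟨h1, h2, h3⟩; positivity
  · filter_upwards [ev_facts] with m ⟨h1, h2, h3⟩
    have hb : 1 ≤ 1 + Real.log m := by linarith
    exact div_le_div₀ (by positivity) (by nlinarith) (by linarith) le_rfl

lemma sq2_zero : Tendsto (fun m : ℕ => 4*(hh1 m - 1)^2/((m:ℝ)-1)^2) atTop (nhds 0) := by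
  refine tendsto_of_tendsto_of_tendsto_of_le_of_le' tendsto_const_nhds tendsto_gnat ?_ ?_
  · filter_upwards [ev_facts] with m ⟨h1, h2, h3⟩; positivity
  · filter_upwards [ev_facts] with m ⟨h1, h2, h3⟩
    have hb : 1 ≤ 1 + Real.log m := by linarith
    have hsq : (hh1 m - 1)^2 ≤ (1 + Real.log m)^2 := by nlinarith
    exact div_le_div₀ (by positivity) (by nlinarith) (by linarith) (by nlinarith)

lemma main_limit : Tendsto (fun m : ℕ =>
    4 * ((∑ i ∈ Finset.Icc 1 m, (1 : ℝ) / (i : ℝ) ^ 2) - 1)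
      - 2 * (∑ i ∈ Finset.Icc 1 m, (1 : ℝ) / i) ^ 2 / ((m : ℝ) - 1)
      + 4 * (∑ i ∈ Finset.Icc 1 m, (1 : ℝ) / i) / ((m : ℝ) - 1)
      + 6 * (∑ i ∈ Finset.Icc 1 m, (1 : ℝ) / (i : ℝ) ^ 2) / ((m : ℝ) - 1)
      - 8 / ((m : ℝ) - 1)
      - 4 * ((∑ i ∈ Finset.Icc 1 m, (1 : ℝ) / i) - 1) ^ 2 / ((m : ℝ) - 1) ^ 2)
    Filter.atTop (nhds (2 * Real.pi ^ 2 / 3 - 4)) := by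
  have P1 : Tendsto (fun m : ℕ => 4*(hh2 m - 1)) atTop (nhds (4*(Real.pi^2/6 - 1))) :=
    ((tendsto_hh2.sub_const 1).const_mul 4)
  have P4 : Tendsto (fun m : ℕ => 6*hh2 m/((m:ℝ)-1)) atTop (nhds 0) := by
    have := ((tendsto_hh2.const_mul 6).mul tendsto_inv_sub_one)
    simp only [mul_zero] at this
    refine this.congr (fun m => ?_)
    rw [mul_one_div]
  have P5 : Tendsto (fun m : ℕ => 8/((m:ℝ)-1)) atTop (nhds 0) := by
    have := tendsto_inv_sub_one.const_mul 8
    simp only [mul_zero] at this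
    refine this.congr (fun m => ?_)
    rw [mul_one_div]
  have := ((((P1.sub sq_zero).add lin_zero).add P4).sub P5).sub sq2_zero
  have heq : 4*(Real.pi^2/6 - 1) - 0 + 0 + 0 - 0 - 0 = 2 * Real.pi ^ 2 / 3 - 4 := by ring
  rw [heq] at this
  exact this.congr (fun m => by simp only [hh1, hh2])


lemma integrableOn_pow_exp {r : ℝ} (hr : 0 < r) (k : ℕ) :
    IntegrableOn (fun x : ℝ => r * rexp (-(r*x)) * x^k) (Ioi 0) := by
  have h := integrableOn_rpow_mul_exp_neg_mul_rpow (p := 1) (s := (k:ℝ)) (b := r)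
    (by exact lt_of_lt_of_le neg_one_lt_zero (Nat.cast_nonneg k)) one_pos hr
  have e : (fun x : ℝ => x ^ (k:ℝ) * rexp (-r * x ^ (1:ℝ))) =
      fun x : ℝ => x^k * rexp (-(r*x)) := by
    funext x; rw [Real.rpow_natCast, Real.rpow_one, neg_mul]
  rw [e] at h
  exact (h.const_mul r).congr (Filter.Eventually.of_forall (fun x => by ring))

lemma expMeasure_pow {r : ℝ} (hr : 0 < r) (k : ℕ) :
    Integrable (fun x : ℝ => x ^ k) (expMeasure r) ∧
    ∫ x, x ^ k ∂(expMeasure r) = (Nat.factorial k : ℝ)/r^k := by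
  have hpm : Measurable fun x => Real.toNNReal (gammaPDFReal 1 r x) :=
    (measurable_gammaPDFReal 1 r).real_toNNReal
  have hmeq : expMeasure r =
      volume.withDensity (fun x => ((Real.toNNReal (gammaPDFReal 1 r x) : ℝ≥0) : ℝ≥0∞)) := rfl
  have hind : (fun x : ℝ => (Real.toNNReal (gammaPDFReal 1 r x) : ℝ≥0) • (x^k : ℝ)) =
      Set.indicator (Set.Ici 0) (fun x => r * rexp (-(r*x)) * x^k) := by
    funext x
    have hnn : 0 ≤ gammaPDFReal 1 r x := gammaPDFReal_nonneg one_pos hr x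
    rw [NNReal.smul_def, Real.coe_toNNReal _ hnn]
    simp only [gammaPDFReal, Set.indicator_apply, Set.mem_Ici]
    split_ifs with h
    · rw [Real.rpow_one, Real.Gamma_one, sub_self, Real.rpow_zero]
      exact (smul_eq_mul ..).trans (by ring)
    · simp
  have hIoi : IntegrableOn (fun x : ℝ => r * rexp (-(r*x)) * x^k) (Ioi 0) :=
    integrableOn_pow_exp hr k
  have hIci : IntegrableOn (fun x : ℝ => r * rexp (-(r*x)) * x^k) (Ici 0) :=
    Iff.mpr integrableOn_Ici_iff_integrableOn_Ioi hIoi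
  constructor
  · rw [hmeq, integrable_withDensity_iff_integrable_smul hpm]
    rw [show (fun x : ℝ => (Real.toNNReal (gammaPDFReal 1 r x) : ℝ≥0) • (x^k : ℝ)) =
      Set.indicator (Set.Ici 0) (fun x => r * rexp (-(r*x)) * x^k) from hind]
    exact (integrable_indicator_iff measurableSet_Ici).mpr hIci
  · rw [hmeq, integral_withDensity_eq_integral_smul hpm, hind,
      integral_indicator measurableSet_Ici, integral_Ici_eq_integral_Ioi]
    have step1 : ∫ x in Ioi (0:ℝ), r * rexp (-(r*x)) * x^k
        = r * ∫ x in Ioi (0:ℝ), x^k * rexp (-(r*x)) := by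
      rw [← integral_const_mul]
      exact setIntegral_congr_fun measurableSet_Ioi (fun x _ => by ring)
    have key := integral_rpow_mul_exp_neg_mul_Ioi (a := (k:ℝ)+1) (by positivity) hr
    have e2 : ∫ x in Ioi (0:ℝ), x ^ (((k:ℝ)+1)-1) * rexp (-(r*x))
        = ∫ x in Ioi (0:ℝ), x^k * rexp (-(r*x)) := by
      refine setIntegral_congr_fun measurableSet_Ioi (fun x _ => ?_)
      rw [add_sub_cancel_right, Real.rpow_natCast]
    rw [e2] at key
    rw [step1, key]
    have e3 : ((1:ℝ)/r) ^ ((k:ℝ)+1) = (1/r)^(k+1) := by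
      rw [show ((k:ℝ)+1) = ((k+1 : ℕ) : ℝ) by push_cast; ring, Real.rpow_natCast]
    have e4 : Real.Gamma ((k:ℝ)+1) = (Nat.factorial k : ℝ) := by exact_mod_cast Real.Gamma_nat_eq_factorial k
    rw [e3, e4]
    have : r ≠ 0 := ne_of_gt hr
    field_simp
    rw [one_div, inv_pow, pow_succ]; field_simp

theorem variance_shared_path
    {Ω : Type*} [MeasurableSpace Ω] {P : Measure Ω} [IsProbabilityMeasure P]
    (n : ℕ) (hn : 2 ≤ n)
    (T : ℕ → Ω → ℝ) (κ : Ω → ℕ)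
    (hTmeas : ∀ i, Measurable (T i)) (hκmeas : Measurable κ)
    (hTindep : iIndepFun T P)
    (hTdist : ∀ i ∈ Finset.Icc 1 n, P.map (T i) = expMeasure i)
    (hκrange : ∀ ω, κ ω ∈ Finset.Icc 1 (n - 1))
    (hκdist : ∀ k ∈ Finset.Icc 1 (n - 1),
      P {ω | κ ω = k} =
        ENNReal.ofReal ((2 * ((n : ℝ) + 1) / ((n : ℝ) - 1)) *
          (1 / (((k : ℝ) + 1) * ((k : ℝ) + 2)))))
    (hindep : IndepFun κ (fun ω i => T i ω) P)
    (H1 H2 : ℝ)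
    (hH1 : H1 = ∑ i ∈ Finset.Icc 1 n, (1 : ℝ) / i)
    (hH2 : H2 = ∑ i ∈ Finset.Icc 1 n, (1 : ℝ) / (i : ℝ) ^ 2) :
    (variance (fun ω =>
        (∑ i ∈ Finset.Icc 1 n, T i ω) - ∑ i ∈ Finset.Icc (κ ω + 1) n, T i ω) P =
      4 * (H2 - 1) - 2 * H1 ^ 2 / ((n : ℝ) - 1) + 4 * H1 / ((n : ℝ) - 1)
        + 6 * H2 / ((n : ℝ) - 1) - 8 / ((n : ℝ) - 1)
        - 4 * (H1 - 1) ^ 2 / ((n : ℝ) - 1) ^ 2) ∧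
    Filter.Tendsto (fun m : ℕ =>
        4 * ((∑ i ∈ Finset.Icc 1 m, (1 : ℝ) / (i : ℝ) ^ 2) - 1)
          - 2 * (∑ i ∈ Finset.Icc 1 m, (1 : ℝ) / i) ^ 2 / ((m : ℝ) - 1)
          + 4 * (∑ i ∈ Finset.Icc 1 m, (1 : ℝ) / i) / ((m : ℝ) - 1)
          + 6 * (∑ i ∈ Finset.Icc 1 m, (1 : ℝ) / (i : ℝ) ^ 2) / ((m : ℝ) - 1)
          - 8 / ((m : ℝ) - 1)
          - 4 * ((∑ i ∈ Finset.Icc 1 m, (1 : ℝ) / i) - 1) ^ 2 / ((m : ℝ) - 1) ^ 2)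
      Filter.atTop (nhds (2 * Real.pi ^ 2 / 3 - 4)) := by
  refine ⟨?_, main_limit⟩
  set m : ℕ := n - 1 with hm_def
  have hm1 : 1 ≤ m := by omega
  have hnm : n = m + 1 := by omega
  have hncast : (n:ℝ) = (m:ℝ) + 1 := by rw [hnm]; push_cast; ring
  have hMge : (1:ℝ) ≤ (m:ℝ) := by exact_mod_cast hm1
  -- moments of T
  have hTfact : ∀ i ∈ Finset.Icc 1 n, ∀ k : ℕ,
      Integrable (fun ω => T i ω ^ k) P ∧
      ∫ ω, T i ω ^ k ∂P = (Nat.factorial k : ℝ)/(i:ℝ)^k := by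
    intro i hi k
    have hi1 : 1 ≤ i := (Finset.mem_Icc.mp hi).1
    have hipos : (0:ℝ) < (i:ℝ) := by exact_mod_cast Nat.lt_of_lt_of_le Nat.zero_lt_one hi1
    have hmom := expMeasure_pow hipos k
    rw [← hTdist i hi] at hmom
    have haesm : AEStronglyMeasurable (fun x : ℝ => x ^ k) (P.map (T i)) :=
      (measurable_id.pow_const k).aestronglyMeasurable
    constructor
    · have := (integrable_map_measure haesm (hTmeas i).aemeasurable).mp hmom.1
      simpa [Function.comp_def] using this
    · have hcv := integral_map (hTmeas i).aemeasurable haesm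
      rw [hcv] at hmom
      exact hmom.2
  have hTint : ∀ i ∈ Finset.Icc 1 n, Integrable (fun ω => T i ω) P := by
    intro i hi; simpa using (hTfact i hi 1).1
  have hTmean : ∀ i ∈ Finset.Icc 1 n, ∫ ω, T i ω ∂P = 1/(i:ℝ) := by
    intro i hi
    have := (hTfact i hi 1).2
    simpa [Nat.factorial] using this
  have hTmem2 : ∀ i ∈ Finset.Icc 1 n, MemLp (T i) 2 P := fun i hi =>
    (memLp_two_iff_integrable_sq (hTmeas i).aestronglyMeasurable).mpr (hTfact i hi 2).1
  -- partial sums S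
  set S : ℕ → Ω → ℝ := fun k ω => ∑ i ∈ Finset.Icc 1 k, T i ω with hS_def
  have hsub : ∀ k ∈ Finset.Icc 1 m, Finset.Icc 1 k ⊆ Finset.Icc 1 n := by
    intro k hk
    exact Finset.Icc_subset_Icc le_rfl (by have := (Finset.mem_Icc.mp hk).2; omega)
  have hSmeas : ∀ k, Measurable (S k) := fun k =>
    Finset.measurable_sum _ (fun i _ => hTmeas i)
  have hSmem : ∀ k ∈ Finset.Icc 1 m, MemLp (S k) 2 P := by
    intro k hk
    have h := memLp_finset_sum' (Finset.Icc 1 k) (fun i hi => hTmem2 i (hsub k hk hi))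
    have e : (∑ i ∈ Finset.Icc 1 k, T i) = S k := by funext ω; simp [Finset.sum_apply, hS_def]
    rwa [e] at h
  have hSsq_int : ∀ k ∈ Finset.Icc 1 m, Integrable (fun ω => S k ω ^ 2) P := fun k hk =>
    (memLp_two_iff_integrable_sq (hSmeas k).aestronglyMeasurable).mp (hSmem k hk)
  have hSmean : ∀ k ∈ Finset.Icc 1 m, ∫ ω, S k ω ∂P = hh1 k := by
    intro k hk
    rw [show (fun ω => S k ω) = fun ω => ∑ i ∈ Finset.Icc 1 k, T i ω from rfl,
      integral_finset_sum _ (fun i hi => hTint i (hsub k hk hi))]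
    exact Finset.sum_congr rfl fun i hi => hTmean i (hsub k hk hi)
  have hSsq_mean : ∀ k ∈ Finset.Icc 1 m, ∫ ω, S k ω ^ 2 ∂P = hh2 k + hh1 k ^ 2 := by
    intro k hk
    have hint : ∀ i ∈ Finset.Icc 1 k, ∀ j ∈ Finset.Icc 1 k,
        Integrable (fun ω => T i ω * T j ω) P := by
      intro i hi j hj
      rcases eq_or_ne i j with rfl | hij
      · simpa [pow_two] using (hTfact i (hsub k hk hi) 2).1
      · have := (hTindep.indepFun hij).integrable_mul
          (hTint i (hsub k hk hi)) (hTint j (hsub k hk hj))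
        exact this
    have hEprod : ∀ i ∈ Finset.Icc 1 k, ∀ j ∈ Finset.Icc 1 k,
        ∫ ω, T i ω * T j ω ∂P
          = (1/(i:ℝ))*(1/(j:ℝ)) + (if i = j then 1/(i:ℝ)^2 else 0) := by
      intro i hi j hj
      have hi1 : 1 ≤ i := (Finset.mem_Icc.mp hi).1
      have hipos : (0:ℝ) < (i:ℝ) := by exact_mod_cast Nat.lt_of_lt_of_le Nat.zero_lt_one hi1
      rcases eq_or_ne i j with rfl | hij
      · rw [if_pos rfl]
        have h2 := (hTfact i (hsub k hk hi) 2).2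
        have he : ∫ ω, T i ω * T i ω ∂P = (Nat.factorial 2 : ℝ)/(i:ℝ)^2 := by
          rw [← h2]; congr 1; funext ω; ring
        rw [he]
        have : (i:ℝ) ≠ 0 := ne_of_gt hipos
        simp [Nat.factorial]
        field_simp
        ring
      · rw [if_neg hij, add_zero]
        have hmul := (hTindep.indepFun hij).integral_mul_eq_mul_integral
          (hTint i (hsub k hk hi)).aestronglyMeasurable (hTint j (hsub k hk hj)).aestronglyMeasurable
        have he : ∫ ω, T i ω * T j ω ∂P = (∫ ω, T i ω ∂P) * ∫ ω, T j ω ∂P := by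
          simpa [Pi.mul_apply] using hmul
        rw [he, hTmean i (hsub k hk hi), hTmean j (hsub k hk hj)]
    calc ∫ ω, S k ω ^ 2 ∂P
        = ∫ ω, ∑ i ∈ Finset.Icc 1 k, ∑ j ∈ Finset.Icc 1 k, T i ω * T j ω ∂P := by
          congr 1; funext ω
          rw [pow_two]
          exact Finset.sum_mul_sum _ _ _ _
      _ = ∑ i ∈ Finset.Icc 1 k, ∑ j ∈ Finset.Icc 1 k, ∫ ω, T i ω * T j ω ∂P := by
          rw [integral_finset_sum _ (fun i hi => integrable_finset_sum _
            (fun j hj => hint i hi j hj))]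
          exact Finset.sum_congr rfl fun i hi =>
            integral_finset_sum _ (fun j hj => hint i hi j hj)
      _ = ∑ i ∈ Finset.Icc 1 k, ∑ j ∈ Finset.Icc 1 k,
            ((1/(i:ℝ))*(1/(j:ℝ)) + (if i = j then 1/(i:ℝ)^2 else 0)) :=
          Finset.sum_congr rfl fun i hi => Finset.sum_congr rfl fun j hj => hEprod i hi j hj
      _ = hh2 k + hh1 k ^ 2 := by
          rw [show (∑ i ∈ Finset.Icc 1 k, ∑ j ∈ Finset.Icc 1 k,
              ((1/(i:ℝ))*(1/(j:ℝ)) + (if i = j then 1/(i:ℝ)^2 else 0)))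
            = (∑ i ∈ Finset.Icc 1 k, ∑ j ∈ Finset.Icc 1 k, (1/(i:ℝ))*(1/(j:ℝ)))
              + ∑ i ∈ Finset.Icc 1 k, ∑ j ∈ Finset.Icc 1 k,
                  (if i = j then 1/(i:ℝ)^2 else 0) by
            rw [← Finset.sum_add_distrib]
            exact Finset.sum_congr rfl fun i hi => Finset.sum_add_distrib]
          have e1 : (∑ i ∈ Finset.Icc 1 k, ∑ j ∈ Finset.Icc 1 k, (1/(i:ℝ))*(1/(j:ℝ)))
              = hh1 k ^ 2 := by
            rw [← Finset.sum_mul_sum]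
            unfold hh1; rw [pow_two]
          have e2 : (∑ i ∈ Finset.Icc 1 k, ∑ j ∈ Finset.Icc 1 k,
              (if i = j then 1/(i:ℝ)^2 else 0)) = hh2 k := by
            unfold hh2
            refine Finset.sum_congr rfl fun i hi => ?_
            rw [Finset.sum_ite_eq (Finset.Icc 1 k) i (fun _ => 1/(i:ℝ)^2), if_pos hi]
          rw [e1, e2]; ring
  -- events
  set A : ℕ → Set Ω := fun k => {ω | κ ω = k} with hA_def
  have hAmeas : ∀ k, MeasurableSet (A k) := fun k => hκmeas (measurableSet_singleton k)
  have h2n : (2:ℝ) ≤ (n:ℝ) := by exact_mod_cast hn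
  have hPA : ∀ k ∈ Finset.Icc 1 m, (P (A k)).toReal
      = (2*((n:ℝ)+1)/((n:ℝ)-1)) * (1/(((k:ℝ)+1)*((k:ℝ)+2))) := by
    intro k hk
    rw [show A k = {ω | κ ω = k} from rfl, hκdist k hk, ENNReal.toReal_ofReal]
    have hd : (0:ℝ) < (n:ℝ) - 1 := by linarith
    positivity
  -- independence factorization
  have hVmeas : Measurable (fun ω i => T i ω) := measurable_pi_lambda _ (fun i => hTmeas i)
  have hfact : ∀ (k : ℕ) (g : (ℕ → ℝ) → ℝ), Measurable g →
      ∫ ω, (A k).indicator (fun ω' => g (fun i => T i ω')) ω ∂P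
        = (P (A k)).toReal * ∫ ω, g (fun i => T i ω) ∂P := by
    intro k g hg
    have hφm : Measurable (fun t : ℕ => if t = k then (1:ℝ) else 0) := measurable_from_nat
    have hcomp : IndepFun ((fun t : ℕ => if t = k then (1:ℝ) else 0) ∘ κ)
        (g ∘ (fun ω i => T i ω)) P := hindep.comp hφm hg
    have heq : (fun ω => (A k).indicator (fun ω' => g (fun i => T i ω')) ω)
        = ((fun t : ℕ => if t = k then (1:ℝ) else 0) ∘ κ) * (g ∘ (fun ω i => T i ω)) := by
      funext ω
      simp only [Set.indicator_apply, Pi.mul_apply, Function.comp_apply, hA_def,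
        Set.mem_setOf_eq]
      by_cases h : κ ω = k
      · simp [h]
      · simp [h]
    have hmul := hcomp.integral_mul_eq_mul_integral ((hφm.comp hκmeas).aestronglyMeasurable)
      ((hg.comp hVmeas).aestronglyMeasurable)
    have hφint : ∫ ω, ((fun t : ℕ => if t = k then (1:ℝ) else 0) ∘ κ) ω ∂P
        = (P (A k)).toReal := by
      have he2 : ((fun t : ℕ => if t = k then (1:ℝ) else 0) ∘ κ)
          = (A k).indicator (fun _ => (1:ℝ)) := by
        funext ω
        simp only [Set.indicator_apply, Function.comp_apply, hA_def, Set.mem_setOf_eq]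
      rw [he2, integral_indicator_const (1:ℝ) (hAmeas k)]
      simp; rfl
    calc ∫ ω, (A k).indicator (fun ω' => g (fun i => T i ω')) ω ∂P
        = ∫ ω, (((fun t : ℕ => if t = k then (1:ℝ) else 0) ∘ κ)
            * (g ∘ (fun ω i => T i ω))) ω ∂P := by rw [← heq]
      _ = (∫ ω, ((fun t : ℕ => if t = k then (1:ℝ) else 0) ∘ κ) ω ∂P)
            * ∫ ω, (g ∘ (fun ω i => T i ω)) ω ∂P := hmul
      _ = (P (A k)).toReal * ∫ ω, g (fun i => T i ω) ∂P := by
            rw [hφint]; rfl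
  have hfactS : ∀ k ∈ Finset.Icc 1 m,
      ∫ ω, (A k).indicator (S k) ω ∂P = (P (A k)).toReal * hh1 k := by
    intro k hk
    have hg : Measurable (fun v : ℕ → ℝ => ∑ i ∈ Finset.Icc 1 k, v i) :=
      Finset.measurable_sum _ (fun i _ => measurable_pi_apply i)
    have h := hfact k _ hg
    rw [← hSmean k hk]
    convert h using 2
  have hfactS2 : ∀ k ∈ Finset.Icc 1 m,
      ∫ ω, (A k).indicator (fun ω' => S k ω' ^ 2) ω ∂P
        = (P (A k)).toReal * (hh2 k + hh1 k ^ 2) := by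
    intro k hk
    have hg : Measurable (fun v : ℕ → ℝ => (∑ i ∈ Finset.Icc 1 k, v i) ^ 2) :=
      (Finset.measurable_sum _ (fun i _ => measurable_pi_apply i)).pow_const 2
    have h := hfact k _ hg
    rw [← hSsq_mean k hk]
    convert h using 2
  -- X decomposition
  set X : Ω → ℝ := fun ω =>
    (∑ i ∈ Finset.Icc 1 n, T i ω) - ∑ i ∈ Finset.Icc (κ ω + 1) n, T i ω with hX_def
  have hXpt : ∀ ω, X ω = S (κ ω) ω := by
    intro ω
    have hκω := Finset.mem_Icc.mp (hκrange ω)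
    have hsplit : (∑ i ∈ Finset.Icc 1 (κ ω), T i ω)
        + ∑ i ∈ Finset.Icc (κ ω + 1) n, T i ω = ∑ i ∈ Finset.Icc 1 n, T i ω := by
      rw [show Finset.Icc 1 (κ ω) = Finset.Ioc 0 (κ ω) from Finset.Icc_add_one_left_eq_Ioc 0 (κ ω),
        show Finset.Icc (κ ω + 1) n = Finset.Ioc (κ ω) n from Finset.Icc_add_one_left_eq_Ioc (κ ω) n,
        show Finset.Icc 1 n = Finset.Ioc 0 n from Finset.Icc_add_one_left_eq_Ioc 0 n]
      exact Finset.sum_Ioc_consecutive _ (Nat.zero_le _) (by omega)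
    show (∑ i ∈ Finset.Icc 1 n, T i ω) - ∑ i ∈ Finset.Icc (κ ω + 1) n, T i ω
      = ∑ i ∈ Finset.Icc 1 (κ ω), T i ω
    linarith [hsplit]
  have hdec : ∀ (F : ℕ → Ω → ℝ) (ω : Ω),
      ∑ k ∈ Finset.Icc 1 m, (A k).indicator (F k) ω = F (κ ω) ω := by
    intro F ω
    have : ∀ k, (A k).indicator (F k) ω = if κ ω = k then F k ω else 0 := by
      intro k
      simp only [Set.indicator_apply, hA_def, Set.mem_setOf_eq]
    simp only [this]
    rw [Finset.sum_ite_eq (Finset.Icc 1 m) (κ ω) (fun k => F k ω), if_pos (hκrange ω)]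
  have hXdec : X = fun ω => ∑ k ∈ Finset.Icc 1 m, (A k).indicator (S k) ω := by
    funext ω; rw [hXpt ω, hdec S ω]
  have hX2dec : (fun ω => X ω ^ 2)
      = fun ω => ∑ k ∈ Finset.Icc 1 m, (A k).indicator (fun ω' => S k ω' ^ 2) ω := by
    funext ω; rw [hXpt ω, hdec (fun k ω' => S k ω' ^ 2) ω]
  have hXmem : MemLp X 2 P := by
    rw [hXdec]
    have h := memLp_finset_sum' (Finset.Icc 1 m)
      (fun k hk => ((hSmem k hk).indicator (hAmeas k)))
    have e : (∑ k ∈ Finset.Icc 1 m, (A k).indicator (S k))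
        = fun ω => ∑ k ∈ Finset.Icc 1 m, (A k).indicator (S k) ω := by
      funext ω; simp [Finset.sum_apply]
    rwa [e] at h
  have hEX : ∫ ω, X ω ∂P = ∑ k ∈ Finset.Icc 1 m, (P (A k)).toReal * hh1 k := by
    rw [show (fun ω => X ω) = X from rfl, hXdec,
      integral_finset_sum _ (fun k hk =>
        (((hSmem k hk).indicator (hAmeas k)).integrable one_le_two))]
    exact Finset.sum_congr rfl fun k hk => hfactS k hk
  have hEX2 : ∫ ω, X ω ^ 2 ∂P
      = ∑ k ∈ Finset.Icc 1 m, (P (A k)).toReal * (hh2 k + hh1 k ^ 2) := by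
    rw [show (fun ω => X ω ^ 2) = fun ω => ∑ k ∈ Finset.Icc 1 m,
        (A k).indicator (fun ω' => S k ω' ^ 2) ω from hX2dec,
      integral_finset_sum _ (fun k hk => ((hSsq_int k hk).indicator (hAmeas k)))]
    exact Finset.sum_congr rfl fun k hk => hfactS2 k hk
  -- conclude
  have hvar := variance_eq_sub (μ := P) hXmem
  simp only [Pi.pow_apply] at hvar
  rw [hvar]
  have hEX' : P[X] = ∑ k ∈ Finset.Icc 1 m, (P (A k)).toReal * hh1 k := hEX
  have hEX2' : (∫ ω, X ω ^ 2 ∂P)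
      = ∑ k ∈ Finset.Icc 1 m, (P (A k)).toReal * (hh2 k + hh1 k ^ 2) := hEX2
  rw [hEX', hEX2']
  have e1 : ∑ k ∈ Finset.Icc 1 m, (P (A k)).toReal * (hh2 k + hh1 k ^ 2)
      = (2*((n:ℝ)+1)/((n:ℝ)-1)) * ∑ k ∈ Finset.Icc 1 m,
          (1/(((k:ℝ)+1)*((k:ℝ)+2))) * (hh2 k + hh1 k ^ 2) := by
    rw [Finset.mul_sum]
    exact Finset.sum_congr rfl fun k hk => by rw [hPA k hk]; ring
  have e2 : ∑ k ∈ Finset.Icc 1 m, (P (A k)).toReal * hh1 k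
      = (2*((n:ℝ)+1)/((n:ℝ)-1)) * ∑ k ∈ Finset.Icc 1 m,
          (1/(((k:ℝ)+1)*((k:ℝ)+2))) * hh1 k := by
    rw [Finset.mul_sum]
    exact Finset.sum_congr rfl fun k hk => by rw [hPA k hk]; ring
  rw [e1, e2, sumCD m hm1, sumB m hm1]
  have hH1' : H1 = hh1 m + 1/((m:ℝ)+1) := by
    rw [hH1, show (∑ i ∈ Finset.Icc 1 n, (1:ℝ)/i) = hh1 n from rfl, hnm, hh1_succ]
  have hH2' : H2 = hh2 m + 1/((m:ℝ)+1)^2 := by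
    rw [hH2, show (∑ i ∈ Finset.Icc 1 n, (1:ℝ)/(i:ℝ)^2) = hh2 n from rfl, hnm, hh2_succ]
  rw [hH1', hH2', hncast]
  have hm0 : (m:ℝ) ≠ 0 := by linarith
  have hm1' : (m:ℝ)+1 ≠ 0 := by linarith
  have hm2' : (m:ℝ)+2 ≠ 0 := by linarith
  have hms : (m:ℝ) + 1 - 1 = (m:ℝ) := by ring
  rw [hms]
  field_simp
  ring
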